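/- Let A, B, C be n×n matrices over the nonnegative reals with Tr(C) ≤ 1, and let α, β > 0 satisfy α ≥ max(λ, σ) and β ≥ max(μ, θ, G(α)). Then the set of positive vectors x satisfying f_A(x) ≤ α, f_B(x) ≤ β and C ⊗ x ≤ x equals { (α^{-1}A ⊕ β^{-1}B ⊕ C)* ⊗ u : u a positive vector }. -/

import Mathlib

open scoped NNReal

/-- Square matrices over the max-times semifield of nonnegative reals. -/
abbrev TMat (n : ℕ) := Matrix (Fin n) (Fin n) ℝ≥0

/-- Tropical (max-times) matrix product. -/
noncomputable def tmul {n : ℕ} (A B : TMat n) : TMat n :=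
  fun i j => Finset.univ.sup fun k => A i k * B k j

/-- Tropical (max-times) matrix-vector product. -/
noncomputable def tmulVec {n : ℕ} (A : TMat n) (x : Fin n → ℝ≥0) : Fin n → ℝ≥0 :=
  fun i => Finset.univ.sup fun j => A i j * x j

/-- Tropical identity matrix. -/
noncomputable def tId (n : ℕ) : TMat n := fun i j => if i = j then 1 else 0

/-- Tropical matrix powers. -/
noncomputable def tpow {n : ℕ} (A : TMat n) : ℕ → TMat n
  | 0 => tId n
  | k + 1 => tmul A (tpow A k)

/-- Tropical (entrywise max) matrix addition. -/
noncomputable def tadd {n : ℕ} (A B : TMat n) : TMat n := fun i j => A i j ⊔ B i j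

/-- Entrywise scalar multiplication. -/
noncomputable def tsmul {n : ℕ} (a : ℝ≥0) (A : TMat n) : TMat n := fun i j => a * A i j

/-- Tropical trace: tr A = max_i a_{ii}. -/
noncomputable def ttr {n : ℕ} (A : TMat n) : ℝ≥0 := Finset.univ.sup fun i => A i i

/-- Tropical "determinant": Tr(A) = max_{k=1..n} tr(A^k). -/
noncomputable def tTr {n : ℕ} (A : TMat n) : ℝ≥0 :=
  (Finset.Icc 1 n).sup fun k => ttr (tpow A k)

/-- Kleene star: entrywise max of A^0, ..., A^{n-1}. -/
noncomputable def tstar {n : ℕ} (A : TMat n) : TMat n :=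
  fun i j => (Finset.range n).sup fun k => tpow A k i j

/-- Tropical product of a finite chain of matrices F 0 ⊗ F 1 ⊗ ⋯ ⊗ F (k-1). -/
noncomputable def tchain {n : ℕ} : (k : ℕ) → (Fin k → TMat n) → TMat n
  | 0, _ => tId n
  | k + 1, F => tmul (F 0) (tchain k fun t => F t.succ)

/-- Tuples of k nonnegative integers with sum m. -/
def tuples (k m : ℕ) : Finset (Fin k → Fin (m + 1)) :=
  Finset.univ.filter fun f => (∑ t, (f t : ℕ)) = m

/-- Tuples of k integers from {0,1} with sum l. -/
def binTuples (k l : ℕ) : Finset (Fin k → Fin 2) :=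
  Finset.univ.filter fun j => (∑ t, (j t : ℕ)) = l

/-- The objective f_M(x) = max_{i,j} m_{ij} x_j / x_i. -/
noncomputable def fobj {n : ℕ} (M : TMat n) (x : Fin n → ℝ≥0) : ℝ≥0 :=
  Finset.univ.sup fun p : Fin n × Fin n => M p.1 p.2 * x p.2 / x p.1

/-- Spectral radius: λ = max_{k=1..n} (tr(A^k))^{1/k}. -/
noncomputable def specRad {n : ℕ} (A : TMat n) : ℝ≥0 :=
  (Finset.Icc 1 n).sup fun k => ttr (tpow A k) ^ ((1 : ℝ) / k)

/-- σ = max over k=1..n-1, m=1..n-k and tuples (i_1,…,i_k) with sum m of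
    (tr(A^{i_1} C ⋯ A^{i_k} C))^{1/m}. -/
noncomputable def sigmaC {n : ℕ} (A C : TMat n) : ℝ≥0 :=
  (Finset.Icc 1 (n - 1)).sup fun k =>
    (Finset.Icc 1 (n - k)).sup fun m =>
      (tuples k m).sup fun f =>
        ttr (tchain k fun t => tmul (tpow A (f t : ℕ)) C) ^ ((1 : ℝ) / m)

/-- r_{k,l,m} = max over tuples (i_1,…,i_k) with sum m and (j_1,…,j_k) ∈ {0,1}^k with
    sum l of tr(A^{i_1} B^{j_1} C^{1-j_1} ⋯ A^{i_k} B^{j_k} C^{1-j_k}). -/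
noncomputable def rklm {n : ℕ} (A B C : TMat n) (k l m : ℕ) : ℝ≥0 :=
  (tuples k m).sup fun f =>
    (binTuples k l).sup fun j =>
      ttr (tchain k fun t =>
        tmul (tpow A (f t : ℕ)) (tmul (tpow B (j t : ℕ)) (tpow C (1 - (j t : ℕ)))))

/-- G(s) = max_{k,m,l} r_{k,l,m}^{1/l} s^{-m/l}. -/
noncomputable def Gfun {n : ℕ} (A B C : TMat n) (s : ℝ≥0) : ℝ≥0 :=
  (Finset.Icc 1 (n - 1)).sup fun k =>
    (Finset.Icc 1 (n - k)).sup fun m =>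
      (Finset.Icc 1 k).sup fun l =>
        rklm A B C k l m ^ ((1 : ℝ) / l) * s ^ (-(m : ℝ) / l)

/-- H(t) = max_{k,m,l} r_{k,l,m}^{1/m} t^{-l/m}. -/
noncomputable def Hfun {n : ℕ} (A B C : TMat n) (t : ℝ≥0) : ℝ≥0 :=
  (Finset.Icc 1 (n - 1)).sup fun k =>
    (Finset.Icc 1 (n - k)).sup fun m =>
      (Finset.Icc 1 k).sup fun l =>
        rklm A B C k l m ^ ((1 : ℝ) / m) * t ^ (-(l : ℝ) / m)

/-- Unconstrained r_{k,m} = max over tuples (i_1,…,i_k) with sum m of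
    tr(A^{i_1} B ⋯ A^{i_k} B). -/
noncomputable def rkm {n : ℕ} (A B : TMat n) (k m : ℕ) : ℝ≥0 :=
  (tuples k m).sup fun f => ttr (tchain k fun t => tmul (tpow A (f t : ℕ)) B)

/-- Unconstrained G(s) = max_{k,m} r_{k,m}^{1/k} s^{-m/k}. -/
noncomputable def Gfun0 {n : ℕ} (A B : TMat n) (s : ℝ≥0) : ℝ≥0 :=
  (Finset.Icc 1 (n - 1)).sup fun k =>
    (Finset.Icc 1 (n - k)).sup fun m =>
      rkm A B k m ^ ((1 : ℝ) / k) * s ^ (-(m : ℝ) / k)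

/-- Unconstrained H(t) = max_{k,m} r_{k,m}^{1/m} t^{-k/m}. -/
noncomputable def Hfun0 {n : ℕ} (A B : TMat n) (t : ℝ≥0) : ℝ≥0 :=
  (Finset.Icc 1 (n - 1)).sup fun k =>
    (Finset.Icc 1 (n - k)).sup fun m =>
      rkm A B k m ^ ((1 : ℝ) / m) * t ^ (-(k : ℝ) / m)

/-- Pareto-minimal points of a set V ⊆ ℝ≥0 × ℝ≥0. -/
def ParetoMin (V : Set (ℝ≥0 × ℝ≥0)) (p : ℝ≥0 × ℝ≥0) : Prop :=
  p ∈ V ∧ ¬∃ q ∈ V, q.1 ≤ p.1 ∧ q.2 ≤ p.2 ∧ q ≠ p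

open Finset

section Aux
variable {n : ℕ}

lemma tmul_apply (A B : TMat n) (i j : Fin n) :
    tmul A B i j = Finset.univ.sup fun k => A i k * B k j := rfl


lemma le_tmul (A B : TMat n) (i j k : Fin n) : A i k * B k j ≤ tmul A B i j :=
  Finset.le_sup (f := fun k => A i k * B k j) (Finset.mem_univ k)

lemma tmul_le {A B : TMat n} {i j : Fin n} {c : ℝ≥0} (h : ∀ k, A i k * B k j ≤ c) :
    tmul A B i j ≤ c := Finset.sup_le fun k _ => h k

lemma le_ttr (A : TMat n) (i : Fin n) : A i i ≤ ttr A :=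
  Finset.le_sup (f := fun i => A i i) (Finset.mem_univ i)

lemma ttr_le {A : TMat n} {c : ℝ≥0} (h : ∀ i, A i i ≤ c) : ttr A ≤ c :=
  Finset.sup_le fun i _ => h i

lemma tmul_assoc (A B C : TMat n) : tmul (tmul A B) C = tmul A (tmul B C) := by
  funext i j
  apply le_antisymm
  · refine tmul_le fun k => ?_
    rw [tmul_apply, NNReal.finset_sup_mul]
    refine Finset.sup_le fun p _ => ?_
    calc A i p * B p k * C k j = A i p * (B p k * C k j) := mul_assoc _ _ _
      _ ≤ A i p * tmul B C p j := mul_le_mul' le_rfl (le_tmul B C p j k)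
      _ ≤ _ := le_tmul _ _ _ _ _
  · refine tmul_le fun p => ?_
    rw [tmul_apply B C, NNReal.mul_finset_sup]
    refine Finset.sup_le fun k _ => ?_
    calc A i p * (B p k * C k j) = A i p * B p k * C k j := (mul_assoc _ _ _).symm
      _ ≤ tmul A B i k * C k j := mul_le_mul' (le_tmul A B i k p) le_rfl
      _ ≤ _ := le_tmul _ _ _ _ _

lemma tmul_tId (A : TMat n) : tmul A (tId n) = A := by
  funext i j
  apply le_antisymm
  · refine tmul_le fun k => ?_
    by_cases h : k = j
    · subst h; simp [tId]
    · simp [tId, h]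
  · calc A i j = A i j * tId n j j := by simp [tId]
      _ ≤ _ := le_tmul _ _ _ _ _

lemma tId_tmul (A : TMat n) : tmul (tId n) A = A := by
  funext i j
  apply le_antisymm
  · refine tmul_le fun k => ?_
    by_cases h : i = k
    · subst h; simp [tId]
    · simp [tId, h]
  · calc A i j = tId n i i * A i j := by simp [tId]
      _ ≤ _ := le_tmul _ _ _ _ _

lemma tmul_mono {A A' B B' : TMat n} (h1 : ∀ i j, A i j ≤ A' i j)
    (h2 : ∀ i j, B i j ≤ B' i j) : ∀ i j, tmul A B i j ≤ tmul A' B' i j := by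
  intro i j
  exact tmul_le fun k => le_trans (mul_le_mul' (h1 i k) (h2 k j)) (le_tmul _ _ _ _ _)

lemma ttr_tmul_comm (A B : TMat n) : ttr (tmul A B) = ttr (tmul B A) := by
  have key : ∀ X Y : TMat n, ttr (tmul X Y) ≤ ttr (tmul Y X) := by
    intro X Y
    refine ttr_le fun i => tmul_le fun j => ?_
    calc X i j * Y j i = Y j i * X i j := mul_comm _ _
      _ ≤ tmul Y X j j := le_tmul _ _ _ _ _
      _ ≤ ttr (tmul Y X) := le_ttr _ _
  exact le_antisymm (key A B) (key B A)

lemma ttr_mono {A B : TMat n} (h : ∀ i j, A i j ≤ B i j) : ttr A ≤ ttr B :=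
  ttr_le fun i => le_trans (h i i) (le_ttr _ _)

/-- chain of a list of matrices -/
noncomputable def lchain : List (TMat n) → TMat n
  | [] => tId n
  | X :: l => tmul X (lchain l)

@[simp] lemma lchain_nil : lchain ([] : List (TMat n)) = tId n := rfl
@[simp] lemma lchain_cons (X : TMat n) (l : List (TMat n)) :
    lchain (X :: l) = tmul X (lchain l) := rfl

lemma lchain_append (l1 l2 : List (TMat n)) :
    lchain (l1 ++ l2) = tmul (lchain l1) (lchain l2) := by
  induction l1 with
  | nil => simp [tId_tmul]
  | cons X l ih => simp [ih, tmul_assoc]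

lemma ttr_lchain_rot (u v : List (TMat n)) :
    ttr (lchain (u ++ v)) = ttr (lchain (v ++ u)) := by
  rw [lchain_append, lchain_append, ttr_tmul_comm]

lemma lchain_replicate (k : ℕ) (A : TMat n) :
    lchain (List.replicate k A) = tpow A k := by
  induction k with
  | zero => rfl
  | succ k ih => simp [List.replicate_succ, ih, tpow]

lemma tchain_eq_lchain (k : ℕ) (F : Fin k → TMat n) :
    tchain k F = lchain (List.ofFn F) := by
  induction k with
  | zero => rfl
  | succ k ih => rw [List.ofFn_succ]; simp only [lchain_cons, tchain, ih]

end Aux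
section Vec
variable {n : ℕ}

lemma le_tmulVec (A : TMat n) (x : Fin n → ℝ≥0) (i j : Fin n) :
    A i j * x j ≤ tmulVec A x i :=
  Finset.le_sup (f := fun j => A i j * x j) (Finset.mem_univ j)

lemma tmulVec_le {A : TMat n} {x : Fin n → ℝ≥0} {i : Fin n} {c : ℝ≥0}
    (h : ∀ j, A i j * x j ≤ c) : tmulVec A x i ≤ c := Finset.sup_le fun j _ => h j

lemma tmulVec_tmul (A B : TMat n) (x : Fin n → ℝ≥0) :
    tmulVec (tmul A B) x = tmulVec A (tmulVec B x) := by
  funext i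
  apply le_antisymm
  · refine tmulVec_le fun j => ?_
    rw [tmul_apply, NNReal.finset_sup_mul]
    refine Finset.sup_le fun p _ => ?_
    calc A i p * B p j * x j = A i p * (B p j * x j) := mul_assoc _ _ _
      _ ≤ A i p * tmulVec B x p := mul_le_mul' le_rfl (le_tmulVec _ _ _ _)
      _ ≤ _ := le_tmulVec _ _ _ _
  · refine tmulVec_le fun p => ?_
    show A i p * tmulVec B x p ≤ _
    rw [show tmulVec B x p = Finset.univ.sup fun j => B p j * x j from rfl,
      NNReal.mul_finset_sup]
    refine Finset.sup_le fun j _ => ?_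
    calc A i p * (B p j * x j) = A i p * B p j * x j := (mul_assoc _ _ _).symm
      _ ≤ tmul A B i j * x j := mul_le_mul' (le_tmul _ _ _ _ _) le_rfl
      _ ≤ _ := le_tmulVec _ _ _ _

lemma tmulVec_tId (x : Fin n → ℝ≥0) : tmulVec (tId n) x = x := by
  funext i
  apply le_antisymm
  · refine tmulVec_le fun j => ?_
    by_cases h : i = j
    · subst h; simp [tId]
    · simp [tId, h]
  · calc x i = tId n i i * x i := by simp [tId]
      _ ≤ _ := le_tmulVec _ _ _ _

lemma tmulVec_mono_vec {A : TMat n} {x y : Fin n → ℝ≥0} (h : x ≤ y) :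
    tmulVec A x ≤ tmulVec A y := fun i =>
  tmulVec_le fun j => le_trans (mul_le_mul' le_rfl (h j)) (le_tmulVec _ _ _ _)

lemma tmulVec_mono_mat {A B : TMat n} (h : ∀ i j, A i j ≤ B i j) (x : Fin n → ℝ≥0) :
    tmulVec A x ≤ tmulVec B x := fun i =>
  tmulVec_le fun j => le_trans (mul_le_mul' (h i j) le_rfl) (le_tmulVec _ _ _ _)

lemma tpow_tmulVec_le {M : TMat n} {x : Fin n → ℝ≥0} (hx : tmulVec M x ≤ x) :
    ∀ k, tmulVec (tpow M k) x ≤ x := by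
  intro k
  induction k with
  | zero => rw [show tpow M 0 = tId n from rfl, tmulVec_tId]
  | succ k ih =>
    rw [show tpow M (k+1) = tmul M (tpow M k) from rfl, tmulVec_tmul]
    exact le_trans (tmulVec_mono_vec ih) hx

end Vec

section Path
variable {n : ℕ} (M : TMat n)

lemma pathWeight_le (p : ℕ → Fin n) : ∀ (k s : ℕ),
    (∏ t ∈ Finset.range k, M (p (s + t)) (p (s + t + 1))) ≤ tpow M k (p s) (p (s + k)) := by
  intro k
  induction k with
  | zero => intro s; simp [tpow, tId]
  | succ k ih =>
    intro s
    have hsplit : (∏ t ∈ Finset.range (k+1), M (p (s + t)) (p (s + t + 1)))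
        = M (p s) (p (s + 1)) * ∏ t ∈ Finset.range k, M (p (s + 1 + t)) (p (s + 1 + t + 1)) := by
      rw [Finset.prod_range_succ']
      rw [mul_comm]
      congr 1
      refine Finset.prod_congr rfl fun t _ => ?_
      rw [show s + (t + 1) = s + 1 + t by omega]
    rw [hsplit]
    calc M (p s) (p (s + 1)) * ∏ t ∈ Finset.range k, M (p (s + 1 + t)) (p (s + 1 + t + 1))
        ≤ M (p s) (p (s + 1)) * tpow M k (p (s + 1)) (p (s + 1 + k)) :=
          mul_le_mul' le_rfl (ih (s + 1))
      _ ≤ tmul M (tpow M k) (p s) (p (s + 1 + k)) := le_tmul _ _ _ _ _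
      _ = tpow M (k + 1) (p s) (p (s + (k + 1))) := by
          rw [show s + 1 + k = s + (k + 1) by omega]; rfl

end Path
lemma exists_path {n : ℕ} (M : TMat n) : ∀ (k : ℕ) (i j : Fin n), tpow M k i j ≠ 0 →
    ∃ p : ℕ → Fin n, p 0 = i ∧ p k = j ∧
      tpow M k i j ≤ ∏ t ∈ Finset.range k, M (p t) (p (t + 1)) := by
  intro k
  induction k with
  | zero =>
    intro i j h
    have hij : i = j := by
      by_contra hne
      exact h (by simp [tpow, tId, hne])
    refine ⟨fun _ => i, rfl, hij.symm ▸ rfl, ?_⟩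
    simp [tpow, tId, hij]
  | succ k ih =>
    intro i j h
    have hne : (Finset.univ : Finset (Fin n)).Nonempty := ⟨i, Finset.mem_univ i⟩
    obtain ⟨q, _, hq⟩ := Finset.exists_mem_eq_sup Finset.univ hne
      (fun q => M i q * tpow M k q j)
    have heq : tpow M (k+1) i j = M i q * tpow M k q j := hq
    have h2 : tpow M k q j ≠ 0 := by
      intro h0
      exact h (by rw [heq, h0, mul_zero])
    obtain ⟨p', hp0, hpk, hple⟩ := ih q j h2
    refine ⟨fun t => if t = 0 then i else p' (t - 1), rfl, by simp [hpk], ?_⟩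
    rw [Finset.prod_range_succ']
    simp only [Nat.add_sub_cancel]
    have e1 : ∀ t ∈ Finset.range k,
        M (if t + 1 = 0 then i else p' t) (if t + 1 + 1 = 0 then i else p' (t + 1))
          = M (p' t) (p' (t + 1)) := by
      intro t _; simp
    calc tpow M (k+1) i j = M i q * tpow M k q j := heq
      _ ≤ M i q * ∏ t ∈ Finset.range k, M (p' t) (p' (t + 1)) := mul_le_mul' le_rfl hple
      _ = (∏ t ∈ Finset.range k, M (p' t) (p' (t + 1))) * M i (p' 0) := by
          rw [hp0, mul_comm]
      _ = _ := by
          rw [Finset.prod_congr rfl e1]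
          simp

lemma le_tstar {n : ℕ} (M : TMat n) {k : ℕ} (hk : k < n) (i j : Fin n) :
    tpow M k i j ≤ tstar M i j :=
  Finset.le_sup (f := fun k => tpow M k i j) (Finset.mem_range.mpr hk)

/-- Key path-splicing lemma: if all cycle weights are ≤ 1 then M^n ≤ M^*. -/
lemma tpow_n_le_tstar {n : ℕ} (M : TMat n)
    (hcyc : ∀ r, 1 ≤ r → r ≤ n → ttr (tpow M r) ≤ 1) (i j : Fin n) :
    tpow M n i j ≤ tstar M i j := by
  by_cases h0 : tpow M n i j = 0
  · simp [h0]
  obtain ⟨p, hp0, hpn, hple⟩ := exists_path M n i j h0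
  -- pigeonhole
  have hcard : Fintype.card (Fin n) < Fintype.card (Fin (n + 1)) := by simp
  obtain ⟨a, b, hab, heq⟩ := Fintype.exists_ne_map_eq_of_card_lt
    (fun t : Fin (n + 1) => p t) hcard
  -- wlog a < b
  obtain ⟨a', b', hlt, hpe⟩ : ∃ a' b' : ℕ, a' < b' ∧ b' ≤ n ∧ p a' = p b' := by
    rcases lt_or_gt_of_ne hab with h | h
    · exact ⟨a, b, h, Nat.lt_succ_iff.mp b.isLt, heq⟩
    · exact ⟨b, a, h, Nat.lt_succ_iff.mp a.isLt, heq.symm⟩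
  obtain ⟨hble, hpe⟩ := hpe
  set c := b' - a' with hc
  have hc1 : 1 ≤ c := by omega
  set d := n - b' with hd
  have hnd : n = a' + (c + d) := by omega
  -- the spliced path
  set q : ℕ → Fin n := fun t => if t < a' then p t else p (t + c) with hqdef
  have hq : ∀ t, q t = if t < a' then p t else p (t + c) := fun t => rfl
  -- split the product
  have hsplit : (∏ t ∈ Finset.range n, M (p t) (p (t + 1)))
      = (∏ t ∈ Finset.range a', M (p t) (p (t + 1)))
        * ((∏ t ∈ Finset.range c, M (p (a' + t)) (p (a' + t + 1)))
          * ∏ t ∈ Finset.range d, M (p (a' + c + t)) (p (a' + c + t + 1))) := by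
    rw [hnd, Finset.prod_range_add, Finset.prod_range_add]
    congr 1
    congr 1
    refine Finset.prod_congr rfl fun t _ => ?_
    rw [show a' + (c + t) = a' + c + t by omega]
  -- cycle part ≤ 1
  have hcycle : (∏ t ∈ Finset.range c, M (p (a' + t)) (p (a' + t + 1))) ≤ 1 := by
    calc _ ≤ tpow M c (p a') (p (a' + c)) := pathWeight_le M p c a'
      _ = tpow M c (p a') (p a') := by rw [show a' + c = b' by omega, ← hpe]
      _ ≤ ttr (tpow M c) := le_ttr _ _
      _ ≤ 1 := hcyc c hc1 (by omega)
  -- outer part equals weight of q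
  have houter : (∏ t ∈ Finset.range a', M (p t) (p (t + 1)))
        * (∏ t ∈ Finset.range d, M (p (a' + c + t)) (p (a' + c + t + 1)))
      = ∏ t ∈ Finset.range (a' + d), M (q t) (q (t + 1)) := by
    rw [Finset.prod_range_add]
    congr 1
    · refine Finset.prod_congr rfl fun t ht => ?_
      have ht' : t < a' := Finset.mem_range.mp ht
      rw [hq t, hq (t + 1), if_pos ht']
      by_cases h1 : t + 1 < a'
      · rw [if_pos h1]
      · have : t + 1 = a' := by omega
        rw [if_neg h1, this, show a' + c = b' by omega, ← hpe]
    · refine Finset.prod_congr rfl fun t _ => ?_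
      rw [hq (a' + t), hq (a' + t + 1), if_neg (by omega), if_neg (by omega)]
      rw [show a' + t + c = a' + c + t by omega, show a' + t + 1 + c = a' + c + t + 1 by omega]
  -- spliced path weight ≤ tpow M (a'+d) i j ≤ tstar
  have hqw : (∏ t ∈ Finset.range (a' + d), M (q t) (q (t + 1)))
      ≤ tpow M (a' + d) i j := by
    have := pathWeight_le M q (a' + d) 0
    simp only [Nat.zero_add] at this
    have hq0 : q 0 = i := by
      rw [hq 0]
      by_cases h1 : 0 < a'
      · rw [if_pos h1, hp0]
      · have : a' = 0 := by omega
        rw [if_neg h1, show 0 + c = b' by omega, ← hpe, this, hp0]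
    have hqe : q (a' + d) = j := by
      rw [hq (a' + d), if_neg (by omega), show a' + d + c = n by omega, hpn]
    rwa [hq0, hqe] at this
  calc tpow M n i j ≤ _ := hple
    _ = _ := hsplit
    _ ≤ (∏ t ∈ Finset.range a', M (p t) (p (t + 1)))
        * (1 * ∏ t ∈ Finset.range d, M (p (a' + c + t)) (p (a' + c + t + 1))) :=
        mul_le_mul' le_rfl (mul_le_mul' hcycle le_rfl)
    _ = _ := by rw [one_mul, houter]
    _ ≤ tpow M (a' + d) i j := hqw
    _ ≤ tstar M i j := le_tstar M (by omega) i j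
section Words
variable {n : ℕ}

lemma tsmul_tmul (c : ℝ≥0) (X Y : TMat n) : tmul (tsmul c X) Y = tsmul c (tmul X Y) := by
  funext i j
  show Finset.univ.sup (fun k => c * X i k * Y k j) = c * Finset.univ.sup _
  rw [NNReal.mul_finset_sup]
  exact Finset.sup_congr rfl fun k _ => mul_assoc _ _ _

lemma tsmul_tmul_right (c : ℝ≥0) (X Y : TMat n) :
    tmul X (tsmul c Y) = tsmul c (tmul X Y) := by
  funext i j
  show Finset.univ.sup (fun k => X i k * (c * Y k j)) = c * Finset.univ.sup _
  rw [NNReal.mul_finset_sup]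
  exact Finset.sup_congr rfl fun k _ => by ring

lemma ttr_tsmul (c : ℝ≥0) (X : TMat n) : ttr (tsmul c X) = c * ttr X := by
  show Finset.univ.sup (fun i => c * X i i) = c * Finset.univ.sup _
  rw [NNReal.mul_finset_sup]

/-- scaled letters -/
noncomputable def sMat (A B C : TMat n) (α β : ℝ≥0) : Fin 3 → TMat n :=
  ![tsmul α⁻¹ A, tsmul β⁻¹ B, C]

/-- raw letters -/
noncomputable def uMat (A B C : TMat n) : Fin 3 → TMat n := ![A, B, C]

lemma lchain_scaled (A B C : TMat n) (α β : ℝ≥0) (w : List (Fin 3)) :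
    lchain (w.map (sMat A B C α β)) =
      tsmul (α⁻¹ ^ (w.count 0) * β⁻¹ ^ (w.count 1)) (lchain (w.map (uMat A B C))) := by
  induction w with
  | nil =>
    funext i j; simp [tsmul]
  | cons x l ih =>
    simp only [List.map_cons, lchain_cons, ih, tsmul_tmul_right]
    match x with
    | ⟨0, h⟩ =>
      rw [show (⟨0, h⟩ : Fin 3) = 0 from rfl, show sMat A B C α β 0 = tsmul α⁻¹ A from rfl,
        show uMat A B C 0 = A from rfl, tsmul_tmul]
      funext i j
      simp only [tsmul, List.count_cons]
      norm_num [pow_succ]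
      ring
    | ⟨1, h⟩ =>
      rw [show (⟨1, h⟩ : Fin 3) = 1 from rfl, show sMat A B C α β 1 = tsmul β⁻¹ B from rfl,
        show uMat A B C 1 = B from rfl, tsmul_tmul]
      funext i j
      simp only [tsmul, List.count_cons]
      norm_num [pow_succ]
      ring
    | ⟨2, h⟩ =>
      rw [show (⟨2, h⟩ : Fin 3) = 2 from rfl, show sMat A B C α β 2 = C from rfl,
        show uMat A B C 2 = C from rfl]
      funext i j
      simp only [tsmul, List.count_cons,
        show ((2:Fin 3) == 0) = false from rfl, show ((2:Fin 3) == 1) = false from rfl,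
        if_false, Bool.false_eq_true, add_zero]

/-- word expansion: entries of powers of the tropical sum are dominated by chains of words -/
lemma tpow_tadd_le (A B C : TMat n) (α β : ℝ≥0) :
    ∀ (k : ℕ) (i j : Fin n),
      tpow (tadd (tadd (tsmul α⁻¹ A) (tsmul β⁻¹ B)) C) k i j ≤
        (Finset.univ : Finset (Fin k → Fin 3)).sup
          (fun w => lchain ((List.ofFn w).map (sMat A B C α β)) i j) := by
  set M := tadd (tadd (tsmul α⁻¹ A) (tsmul β⁻¹ B)) C with hM
  have hletter : ∀ i j, M i j ≤ Finset.univ.sup fun a : Fin 3 => sMat A B C α β a i j := by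
    intro i j
    refine sup_le (sup_le ?_ ?_) ?_
    · exact Finset.le_sup (f := fun a : Fin 3 => sMat A B C α β a i j) (Finset.mem_univ 0)
    · exact Finset.le_sup (f := fun a : Fin 3 => sMat A B C α β a i j) (Finset.mem_univ 1)
    · exact Finset.le_sup (f := fun a : Fin 3 => sMat A B C α β a i j) (Finset.mem_univ 2)
  intro k
  induction k with
  | zero =>
    intro i j
    refine le_trans (le_of_eq rfl) ?_
    exact Finset.le_sup (f := fun w : Fin 0 → Fin 3 =>
      lchain ((List.ofFn w).map (sMat A B C α β)) i j) (Finset.mem_univ finZeroElim)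
  | succ k ih =>
    intro i j
    show tmul M (tpow M k) i j ≤ _
    refine tmul_le fun p => ?_
    calc M i p * tpow M k p j
        ≤ (Finset.univ.sup fun a : Fin 3 => sMat A B C α β a i p)
          * ((Finset.univ : Finset (Fin k → Fin 3)).sup
            (fun w => lchain ((List.ofFn w).map (sMat A B C α β)) p j)) :=
          mul_le_mul' (hletter i p) (ih p j)
      _ ≤ _ := by
          rw [NNReal.finset_sup_mul]
          refine Finset.sup_le fun a _ => ?_
          rw [NNReal.mul_finset_sup]
          refine Finset.sup_le fun w _ => ?_
          have step : sMat A B C α β a i p * lchain ((List.ofFn w).map (sMat A B C α β)) p j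
              ≤ lchain ((List.ofFn (Fin.cons a w : Fin (k+1) → Fin 3)).map (sMat A B C α β)) i j := by
            rw [List.ofFn_succ]
            simp only [Fin.cons_zero, Fin.cons_succ, List.map_cons, lchain_cons]
            exact le_tmul _ _ _ _ _
          exact le_trans step (Finset.le_sup (f := fun w : Fin (k+1) → Fin 3 =>
            lchain ((List.ofFn w).map (sMat A B C α β)) i j) (Finset.mem_univ _))

end Words
section Decomp

lemma gdecomp {σ : Type*} [DecidableEq σ] (e : σ) (w : List σ) :
    ∃ (bs : List (ℕ × σ)) (a : ℕ), (∀ q ∈ bs, q.2 ≠ e) ∧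
      w = (bs.flatMap fun q => List.replicate q.1 e ++ [q.2]) ++ List.replicate a e := by
  induction w with
  | nil => exact ⟨[], 0, by simp, by simp⟩
  | cons x l ih =>
    obtain ⟨bs, a, hne, heq⟩ := ih
    by_cases hx : x = e
    · subst hx
      match bs, hne, heq with
      | [], _, heq =>
        refine ⟨[], a + 1, by simp, ?_⟩
        simp only [List.flatMap_nil, List.nil_append] at heq ⊢
        rw [heq, List.replicate_succ]
      | (i, y) :: tl, hne, heq =>
        refine ⟨(i + 1, y) :: tl, a, ?_, ?_⟩
        · intro q hq
          rcases List.mem_cons.mp hq with h | h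
          · rw [h]; exact hne (i, y) (List.mem_cons_self)
          · exact hne q (List.mem_cons_of_mem _ h)
        rw [heq]
        simp [List.replicate_succ, List.flatMap_cons]
    · refine ⟨(0, x) :: bs, a, ?_, ?_⟩
      · intro q hq
        rcases List.mem_cons.mp hq with h | h
        · rw [h]; exact hx
        · exact hne q h
      · rw [heq]; simp [List.flatMap_cons]

variable {n : ℕ}

lemma lchain_flat_blocks (E : TMat n) (U : Fin 3 → TMat n) (e : Fin 3) :
    ∀ bs : List (ℕ × Fin 3), (U e = E) →
      lchain ((bs.flatMap fun q => List.replicate q.1 e ++ [q.2]).map U) =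
        lchain (bs.map fun q => tmul (tpow E q.1) (U q.2)) := by
  intro bs hUe
  induction bs with
  | nil => simp
  | cons q tl ih =>
    obtain ⟨i, y⟩ := q
    rw [List.flatMap_cons, List.map_cons, lchain_cons, List.map_append, List.map_append,
      lchain_append, lchain_append, List.map_replicate, hUe, lchain_replicate]
    show tmul (tmul (tpow E i) (tmul (U y) (tId n))) (lchain _) = _
    rw [tmul_tId, ih, tmul_assoc]

lemma count_flat_self {σ : Type*} [DecidableEq σ] (e : σ) :
    ∀ bs : List (ℕ × σ), (∀ q ∈ bs, q.2 ≠ e) →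
      (bs.flatMap fun q => List.replicate q.1 e ++ [q.2]).count e = (bs.map Prod.fst).sum := by
  intro bs
  induction bs with
  | nil => simp
  | cons q tl ih =>
    intro h
    obtain ⟨i, y⟩ := q
    have hy : y ≠ e := h (i, y) (List.mem_cons_self)
    rw [List.flatMap_cons, List.count_append, List.count_append]
    rw [ih fun q hq => h q (List.mem_cons_of_mem _ hq)]
    simp [List.count_replicate, hy, List.count_singleton]

lemma count_flat_other {σ : Type*} [DecidableEq σ] (e a : σ) (ha : a ≠ e) :
    ∀ bs : List (ℕ × σ),
      (bs.flatMap fun q => List.replicate q.1 e ++ [q.2]).count a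
        = (bs.map Prod.snd).count a := by
  intro bs
  induction bs with
  | nil => simp
  | cons q tl ih =>
    obtain ⟨i, y⟩ := q
    rw [List.flatMap_cons, List.count_append, List.count_append, ih]
    by_cases hy : y = a <;>
      simp [List.count_replicate, List.count_cons, hy, Ne.symm ha, add_comm]

lemma length_flat {σ : Type*} (e : σ) :
    ∀ bs : List (ℕ × σ),
      (bs.flatMap fun q => List.replicate q.1 e ++ [q.2]).length
        = (bs.map Prod.fst).sum + bs.length := by
  intro bs
  induction bs with
  | nil => simp
  | cons q tl ih =>
    obtain ⟨i, y⟩ := q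
    rw [List.flatMap_cons, List.length_append, List.length_append, ih]
    simp
    omega

end Decomp
section Group
variable {n : ℕ}

theorem ofFn_get_eq_map' {α β : Type*} (l : List α) (f : α → β) :
    List.ofFn (fun i : Fin l.length => f (l.get i)) = l.map f := by
  simp

lemma sum_map_fst (bs : List (ℕ × Fin 3)) :
    (bs.map Prod.fst).sum = ∑ t : Fin bs.length, (bs.get t).1 := by
  rw [← ofFn_get_eq_map' bs Prod.fst, List.sum_ofFn]

lemma group_word (A B C : TMat n) (e : Fin 3) (w : List (Fin 3)) (hex : ∃ x ∈ w, x ≠ e) :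
    ∃ (k' : ℕ) (iv : Fin k' → ℕ) (xv : Fin k' → Fin 3),
      1 ≤ k' ∧ (∀ t, xv t ≠ e) ∧ (∑ t, iv t) = w.count e ∧
      k' + ∑ t, iv t = w.length ∧
      (∀ a : Fin 3, a ≠ e → (List.ofFn xv).count a = w.count a) ∧
      ttr (lchain (w.map (uMat A B C))) =
        ttr (tchain k' fun t => tmul (tpow (uMat A B C e) (iv t)) (uMat A B C (xv t))) := by
  obtain ⟨bs, a, hne, heq⟩ := gdecomp e w
  -- bs nonempty
  match bs, hne, heq with
  | [], _, heq =>
    exfalso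
    obtain ⟨x, hxw, hxe⟩ := hex
    rw [heq] at hxw
    simp only [List.flatMap_nil, List.nil_append] at hxw
    exact hxe (List.eq_of_mem_replicate hxw)
  | (i, y) :: tl, hne, heq =>
    set bs' : List (ℕ × Fin 3) := (a + i, y) :: tl with hbs'
    have hne' : ∀ q ∈ bs', q.2 ≠ e := by
      intro q hq
      rcases List.mem_cons.mp hq with h | h
      · rw [h]; exact hne (i, y) (List.mem_cons_self)
      · exact hne q (List.mem_cons_of_mem _ h)
    set w' : List (Fin 3) := bs'.flatMap fun q => List.replicate q.1 e ++ [q.2] with hw'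
    have hmerge : List.replicate a e ++
        (((i, y) :: tl).flatMap fun q => List.replicate q.1 e ++ [q.2]) = w' := by
      rw [hw', hbs', List.flatMap_cons, List.flatMap_cons, ← List.append_assoc,
        ← List.append_assoc, ← List.replicate_add]
    -- counts agree between w and w'
    have hcount : ∀ x : Fin 3, w.count x = w'.count x := by
      intro x
      rw [heq, ← hmerge, List.count_append, List.count_append, Nat.add_comm]
    have hlen : w.length = w'.length := by
      rw [heq, ← hmerge, List.length_append, List.length_append, Nat.add_comm]
    -- trace rotation
    have hrot : ttr (lchain (w.map (uMat A B C))) = ttr (lchain (w'.map (uMat A B C))) := by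
      rw [heq, List.map_append, ttr_lchain_rot, ← List.map_append, hmerge]
    refine ⟨bs'.length, fun t => (bs'.get t).1, fun t => (bs'.get t).2, ?_, ?_, ?_, ?_, ?_, ?_⟩
    · rw [hbs']; simp
    · intro t; exact hne' _ (List.get_mem bs' t)
    · rw [hcount e, hw', count_flat_self e bs' hne', sum_map_fst]
    · rw [hlen, hw', length_flat e bs', sum_map_fst, Nat.add_comm]
    · intro x hx
      rw [hcount x, hw', count_flat_other e x hx bs']
      congr 1
      rw [← ofFn_get_eq_map' bs' Prod.snd]
    · rw [hrot, hw', lchain_flat_blocks (uMat A B C e) (uMat A B C) e bs' rfl,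
        tchain_eq_lchain]
      congr 1
      rw [ofFn_get_eq_map' bs' fun q => tmul (tpow (uMat A B C e) q.1) (uMat A B C q.2)]

end Group
section Rpow

lemma le_pow_of_rpow_le {x y : ℝ≥0} {k : ℕ} (hk : k ≠ 0) (h : x ^ ((1:ℝ)/k) ≤ y) :
    x ≤ y ^ k := by
  have hk' : ((k:ℝ)) ≠ 0 := Nat.cast_ne_zero.mpr hk
  have h2 := NNReal.rpow_le_rpow h (Nat.cast_nonneg k)
  rw [← NNReal.rpow_natCast y k]
  calc x = (x ^ ((1:ℝ)/k)) ^ (k:ℝ) := by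
        rw [← NNReal.rpow_mul, one_div_mul_cancel hk', NNReal.rpow_one]
    _ ≤ y ^ (k:ℝ) := h2

lemma rklm_bound_of_G {r α β : ℝ≥0} {l m : ℕ} (hl : l ≠ 0) (hα : α ≠ 0)
    (h : r ^ ((1:ℝ)/l) * α ^ (-(m:ℝ)/l) ≤ β) : r ≤ β ^ l * α ^ m := by
  have hl' : ((l:ℝ)) ≠ 0 := Nat.cast_ne_zero.mpr hl
  have hstep : r ^ ((1:ℝ)/l) ≤ β * α ^ ((m:ℝ)/l) := by
    have hmul := mul_le_mul' h (le_refl (α ^ ((m:ℝ)/l)))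
    rwa [mul_assoc, ← NNReal.rpow_add hα, neg_div, neg_add_cancel, NNReal.rpow_zero,
      mul_one] at hmul
  have h2 := NNReal.rpow_le_rpow hstep (Nat.cast_nonneg l)
  rw [← NNReal.rpow_mul, one_div_mul_cancel hl', NNReal.rpow_one,
    NNReal.mul_rpow, ← NNReal.rpow_mul, div_mul_cancel₀ _ hl', NNReal.rpow_natCast,
    NNReal.rpow_natCast] at h2
  exact h2

end Rpow

section CountLemmas

lemma count_ofFn_eq_sum {k : ℕ} (f : Fin k → Fin 3) (y : Fin 3) :
    (List.ofFn f).count y = ∑ t, if f t = y then 1 else 0 := by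
  induction k with
  | zero => simp
  | succ k ih =>
    rw [List.ofFn_succ, List.count_cons, ih, Fin.sum_univ_succ]
    rw [Nat.add_comm]
    congr 1
    by_cases h : f 0 = y <;> simp [h]

lemma count3_eq_length (w : List (Fin 3)) :
    w.count 0 + w.count 1 + w.count 2 = w.length := by
  induction w with
  | nil => simp
  | cons x l ih =>
    simp only [List.count_cons, List.length_cons]
    match x with
    | ⟨0, h⟩ =>
      rw [show (⟨0, h⟩ : Fin 3) = 0 from rfl]
      simp only [show ((0:Fin 3) == 0) = true from rfl, show ((0:Fin 3) == 1) = false from rfl,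
        show ((0:Fin 3) == 2) = false from rfl]
      simp only [if_true, Bool.false_eq_true, if_false, add_zero]
      omega
    | ⟨1, h⟩ =>
      rw [show (⟨1, h⟩ : Fin 3) = 1 from rfl]
      simp only [show ((1:Fin 3) == 0) = false from rfl, show ((1:Fin 3) == 1) = true from rfl,
        show ((1:Fin 3) == 2) = false from rfl]
      simp only [if_true, Bool.false_eq_true, if_false, add_zero]
      omega
    | ⟨2, h⟩ =>
      rw [show (⟨2, h⟩ : Fin 3) = 2 from rfl]
      simp only [show ((2:Fin 3) == 0) = false from rfl, show ((2:Fin 3) == 1) = false from rfl,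
        show ((2:Fin 3) == 2) = true from rfl]
      simp only [if_true, Bool.false_eq_true, if_false, add_zero]
      omega

end CountLemmas

section WordBound
variable {n : ℕ}

set_option maxHeartbeats 1600000 in
lemma word_trace_le (A B C : TMat n) (α β : ℝ≥0) (hα : α ≠ 0)
    (hC : tTr C ≤ 1)
    (h1 : specRad A ⊔ sigmaC A C ≤ α) (h2 : specRad B ⊔ sigmaC B C ⊔ Gfun A B C α ≤ β)
    (w : List (Fin 3)) (hw1 : 1 ≤ w.length) (hw2 : w.length ≤ n) :
    ttr (lchain (w.map (uMat A B C))) ≤ α ^ w.count 0 * β ^ w.count 1 := by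
  -- extract hypotheses
  have hlamA : ∀ k, 1 ≤ k → k ≤ n → ttr (tpow A k) ≤ α ^ k := by
    intro k hk1 hk2
    refine le_pow_of_rpow_le (by omega) ?_
    exact Finset.sup_le_iff.mp (le_trans le_sup_left h1) k (Finset.mem_Icc.mpr ⟨hk1, hk2⟩)
  have hlamB : ∀ k, 1 ≤ k → k ≤ n → ttr (tpow B k) ≤ β ^ k := by
    intro k hk1 hk2
    refine le_pow_of_rpow_le (by omega) ?_
    exact Finset.sup_le_iff.mp (le_trans (le_trans le_sup_left le_sup_left) h2) k
      (Finset.mem_Icc.mpr ⟨hk1, hk2⟩)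
  have hσA : ∀ (k : ℕ) (hk : 1 ≤ k) (hk2 : k ≤ n - 1) (m : ℕ) (hm : 1 ≤ m) (hm2 : m ≤ n - k)
      (f : Fin k → Fin (m + 1)) (hf : (∑ t, (f t : ℕ)) = m),
      ttr (tchain k fun t => tmul (tpow A (f t : ℕ)) C) ≤ α ^ m := by
    intro k hk hk2 m hm hm2 f hf
    refine le_pow_of_rpow_le (by omega) ?_
    have hs := le_trans le_sup_right h1
    have := Finset.sup_le_iff.mp hs k (Finset.mem_Icc.mpr ⟨hk, hk2⟩)
    have := Finset.sup_le_iff.mp this m (Finset.mem_Icc.mpr ⟨hm, hm2⟩)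
    exact Finset.sup_le_iff.mp this f
      (Finset.mem_filter.mpr ⟨Finset.mem_univ _, hf⟩)
  have hσB : ∀ (k : ℕ) (hk : 1 ≤ k) (hk2 : k ≤ n - 1) (m : ℕ) (hm : 1 ≤ m) (hm2 : m ≤ n - k)
      (f : Fin k → Fin (m + 1)) (hf : (∑ t, (f t : ℕ)) = m),
      ttr (tchain k fun t => tmul (tpow B (f t : ℕ)) C) ≤ β ^ m := by
    intro k hk hk2 m hm hm2 f hf
    refine le_pow_of_rpow_le (by omega) ?_
    have hs := le_trans (le_trans le_sup_right le_sup_left) h2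
    have := Finset.sup_le_iff.mp hs k (Finset.mem_Icc.mpr ⟨hk, hk2⟩)
    have := Finset.sup_le_iff.mp this m (Finset.mem_Icc.mpr ⟨hm, hm2⟩)
    exact Finset.sup_le_iff.mp this f
      (Finset.mem_filter.mpr ⟨Finset.mem_univ _, hf⟩)
  have hG : ∀ (k : ℕ) (hk : 1 ≤ k) (hk2 : k ≤ n - 1) (m : ℕ) (hm : 1 ≤ m) (hm2 : m ≤ n - k)
      (l : ℕ) (hl : 1 ≤ l) (hl2 : l ≤ k), rklm A B C k l m ≤ β ^ l * α ^ m := by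
    intro k hk hk2 m hm hm2 l hl hl2
    refine rklm_bound_of_G (by omega) hα ?_
    have hs := le_trans le_sup_right h2
    have := Finset.sup_le_iff.mp hs k (Finset.mem_Icc.mpr ⟨hk, hk2⟩)
    have := Finset.sup_le_iff.mp this m (Finset.mem_Icc.mpr ⟨hm, hm2⟩)
    exact Finset.sup_le_iff.mp this l (Finset.mem_Icc.mpr ⟨hl, hl2⟩)
  have hcnt := count3_eq_length w
  have hfin2 : ∀ x : Fin 3, x ≠ 0 → x ≠ 1 → x = 2 := by decide
  have hfin0 : ∀ x : Fin 3, x ≠ 1 → x ≠ 2 → x = 0 := by decide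
  have hfin1 : ∀ x : Fin 3, x ≠ 0 → x ≠ 2 → x = 1 := by decide
  have hfin12 : ∀ x : Fin 3, x ≠ 0 → x = 1 ∨ x = 2 := by decide
  set m := w.count 0 with hm
  set l := w.count 1 with hl
  set c := w.count 2 with hc
  -- helper: identify all-e words
  have hallof : ∀ (y : Fin 3), (∀ x ∈ w, x = y) →
      ttr (lchain (w.map (uMat A B C))) = ttr (tpow (uMat A B C y) w.length) := by
    intro y hall
    have heq := List.eq_replicate_of_mem hall
    conv_lhs => rw [heq]
    rw [List.map_replicate, lchain_replicate]
  by_cases hl0 : l = 0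
  · by_cases hm0 : m = 0
    · -- all C's
      have hall : ∀ x ∈ w, x = 2 := by
        intro x hx
        have h0 : x ≠ 0 := fun h =>
          (List.count_eq_zero.mp (show w.count 0 = 0 by omega)) (h ▸ hx)
        have h1' : x ≠ 1 := fun h =>
          (List.count_eq_zero.mp (show w.count 1 = 0 by omega)) (h ▸ hx)
        exact hfin2 x h0 h1'
      rw [hm0, hl0, pow_zero, pow_zero, mul_one, hallof 2 hall]
      calc ttr (tpow (uMat A B C 2) w.length) = ttr (tpow C w.length) := rfl
        _ ≤ tTr C := Finset.le_sup (f := fun k => ttr (tpow C k))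
            (Finset.mem_Icc.mpr ⟨hw1, hw2⟩)
        _ ≤ 1 := hC
    · by_cases hc0 : c = 0
      · -- all A's
        have hall : ∀ x ∈ w, x = 0 := by
          intro x hx
          have h1' : x ≠ 1 := fun h =>
            (List.count_eq_zero.mp (show w.count 1 = 0 by omega)) (h ▸ hx)
          have h2' : x ≠ 2 := fun h =>
            (List.count_eq_zero.mp (show w.count 2 = 0 by omega)) (h ▸ hx)
          exact hfin0 x h1' h2'
        have hmlen : m = w.length := by
          have : w.count 0 = w.length := by
            rw [List.eq_replicate_of_mem hall, List.count_replicate]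
            simp
          omega
        rw [hl0, pow_zero, mul_one, hallof 0 hall]
        rw [hmlen]
        exact hlamA w.length hw1 hw2
      · -- A's and C's : sigma_A
        have hex : ∃ x ∈ w, x ≠ 0 :=
          ⟨2, List.count_pos_iff.mp (by omega), by decide⟩
        obtain ⟨k', iv, xv, hk1, hxvne, hsum, hlen', hcounts, htr⟩ :=
          group_word A B C 0 w hex
        have hxv2 : ∀ t, xv t = 2 := by
          intro t
          have h1cnt : (List.ofFn xv).count 1 = 0 := by
            rw [hcounts 1 (by decide)]; omega
          have hne1 : xv t ≠ 1 := fun h =>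
            (List.count_eq_zero.mp h1cnt) (h ▸ (List.mem_ofFn.mpr ⟨t, rfl⟩))
          exact hfin2 (xv t) (hxvne t) hne1
        have hivle : ∀ t, iv t ≤ m := by
          intro t
          have := Finset.single_le_sum (f := iv) (fun i _ => Nat.zero_le _) (Finset.mem_univ t)
          omega
        set f : Fin k' → Fin (m + 1) := fun t => ⟨iv t, Nat.lt_succ_of_le (hivle t)⟩ with hfdef
        have hfsum : (∑ t, (f t : ℕ)) = m := hsum
        have hfun : (fun t => tmul (tpow (uMat A B C 0) (iv t)) (uMat A B C (xv t)))
            = fun t => tmul (tpow A ((f t : ℕ))) C := by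
          funext t
          rw [hxv2 t]
          rfl
        rw [hl0, pow_zero, mul_one, htr, hfun]
        exact hσA k' hk1 (by omega) m (by omega) (by omega) f hfsum
  · by_cases hm0 : m = 0
    · by_cases hc0 : c = 0
      · -- all B's
        have hall : ∀ x ∈ w, x = 1 := by
          intro x hx
          have h0' : x ≠ 0 := fun h =>
            (List.count_eq_zero.mp (show w.count 0 = 0 by omega)) (h ▸ hx)
          have h2' : x ≠ 2 := fun h =>
            (List.count_eq_zero.mp (show w.count 2 = 0 by omega)) (h ▸ hx)
          exact hfin1 x h0' h2'
        have hllen : l = w.length := by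
          have : w.count 1 = w.length := by
            rw [List.eq_replicate_of_mem hall, List.count_replicate]
            simp
          omega
        rw [hm0, pow_zero, one_mul, hallof 1 hall, hllen]
        exact hlamB w.length hw1 hw2
      · -- B's and C's : sigma_B
        have hex : ∃ x ∈ w, x ≠ 1 :=
          ⟨2, List.count_pos_iff.mp (by omega), by decide⟩
        obtain ⟨k', iv, xv, hk1, hxvne, hsum, hlen', hcounts, htr⟩ :=
          group_word A B C 1 w hex
        have hxv2 : ∀ t, xv t = 2 := by
          intro t
          have h0cnt : (List.ofFn xv).count 0 = 0 := by
            rw [hcounts 0 (by decide)]; omega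
          have hne0 : xv t ≠ 0 := fun h =>
            (List.count_eq_zero.mp h0cnt) (h ▸ (List.mem_ofFn.mpr ⟨t, rfl⟩))
          exact hfin2 (xv t) hne0 (hxvne t)
        have hivle : ∀ t, iv t ≤ l := by
          intro t
          have := Finset.single_le_sum (f := iv) (fun i _ => Nat.zero_le _) (Finset.mem_univ t)
          omega
        set f : Fin k' → Fin (l + 1) := fun t => ⟨iv t, Nat.lt_succ_of_le (hivle t)⟩ with hfdef
        have hfsum : (∑ t, (f t : ℕ)) = l := hsum
        have hfun : (fun t => tmul (tpow (uMat A B C 1) (iv t)) (uMat A B C (xv t)))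
            = fun t => tmul (tpow B ((f t : ℕ))) C := by
          funext t
          rw [hxv2 t]
          rfl
        rw [hm0, pow_zero, one_mul, htr, hfun]
        exact hσB k' hk1 (by omega) l (by omega) (by omega) f hfsum
    · -- mixed: at least one A and one B : use G
      have hex : ∃ x ∈ w, x ≠ 0 :=
        ⟨1, List.count_pos_iff.mp (by omega), by decide⟩
      obtain ⟨k', iv, xv, hk1, hxvne, hsum, hlen', hcounts, htr⟩ :=
        group_word A B C 0 w hex
      have hxv12 : ∀ t, xv t = 1 ∨ xv t = 2 := by
        intro t
        exact hfin12 (xv t) (hxvne t)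
      have hivle : ∀ t, iv t ≤ m := by
        intro t
        have := Finset.single_le_sum (f := iv) (fun i _ => Nat.zero_le _) (Finset.mem_univ t)
        omega
      set f : Fin k' → Fin (m + 1) := fun t => ⟨iv t, Nat.lt_succ_of_le (hivle t)⟩ with hfdef
      have hfsum : (∑ t, (f t : ℕ)) = m := hsum
      set j : Fin k' → Fin 2 := fun t => if xv t = 1 then 1 else 0 with hjdef
      have hjsum : (∑ t, (j t : ℕ)) = l := by
        have h1 : (List.ofFn xv).count 1 = l := hcounts 1 (by decide)
        rw [count_ofFn_eq_sum xv 1] at h1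
        rw [← h1]
        refine Finset.sum_congr rfl fun t _ => ?_
        by_cases h : xv t = 1 <;> simp [hjdef, h]
      have hlk : l ≤ k' := by
        have h1 : (List.ofFn xv).count 1 = l := hcounts 1 (by decide)
        have : (List.ofFn xv).count (1 : Fin 3) ≤ (List.ofFn xv).length := List.count_le_length
        rw [List.length_ofFn] at this
        omega
      have hfun : (fun t => tmul (tpow (uMat A B C 0) (iv t)) (uMat A B C (xv t)))
          = fun t => tmul (tpow A ((f t : ℕ)))
              (tmul (tpow B ((j t : ℕ))) (tpow C (1 - (j t : ℕ)))) := by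
        funext t
        rcases hxv12 t with h | h
        · rw [h]
          have hj1 : j t = 1 := by simp [hjdef, h]
          rw [hj1]
          show tmul (tpow A (iv t)) B = tmul (tpow A (iv t)) (tmul (tpow B 1) (tpow C 0))
          rw [show tpow B 1 = tmul B (tId n) from rfl, tmul_tId,
            show tpow C 0 = tId n from rfl, tmul_tId]
        · rw [h]
          have hj0 : j t = 0 := by
            have := hxv12 t
            simp [hjdef, h, show (2 : Fin 3) ≠ 1 by decide]
          rw [hj0]
          show tmul (tpow A (iv t)) C = tmul (tpow A (iv t)) (tmul (tpow B 0) (tpow C 1))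
          rw [show tpow B 0 = tId n from rfl, tId_tmul,
            show tpow C 1 = tmul C (tId n) from rfl, tmul_tId]
      have hmem_f : f ∈ tuples k' m := Finset.mem_filter.mpr ⟨Finset.mem_univ _, hfsum⟩
      have hmem_j : j ∈ binTuples k' l := Finset.mem_filter.mpr ⟨Finset.mem_univ _, hjsum⟩
      set Φ : (Fin k' → Fin (m + 1)) → (Fin k' → Fin 2) → ℝ≥0 := fun f j =>
        ttr (tchain k' fun t => tmul (tpow A ((f t : ℕ)))
          (tmul (tpow B ((j t : ℕ))) (tpow C (1 - (j t : ℕ))))) with hPhi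
      have hstep1 : Φ f j ≤ (binTuples k' l).sup (Φ f) := Finset.le_sup hmem_j
      have hstep2 : (binTuples k' l).sup (Φ f)
          ≤ (tuples k' m).sup fun f => (binTuples k' l).sup (Φ f) :=
        Finset.le_sup (f := fun f => (binTuples k' l).sup (Φ f)) hmem_f
      have hstep3 : ((tuples k' m).sup fun f => (binTuples k' l).sup (Φ f))
          = rklm A B C k' l m := rfl
      rw [htr, hfun]
      calc ttr (tchain k' fun t => tmul (tpow A ((f t : ℕ)))
            (tmul (tpow B ((j t : ℕ))) (tpow C (1 - (j t : ℕ))))) = Φ f j := rfl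
        _ ≤ (binTuples k' l).sup (Φ f) := hstep1
        _ ≤ (tuples k' m).sup fun f => (binTuples k' l).sup (Φ f) := hstep2
        _ = rklm A B C k' l m := hstep3
        _ ≤ β ^ l * α ^ m := hG k' hk1 (by omega) m (by omega) (by omega) l (by omega) hlk
        _ = α ^ m * β ^ l := mul_comm _ _

end WordBound
section Final
variable {n : ℕ}

lemma sup_mul_le3 {a b c x y : ℝ≥0} (h1 : a * x ≤ y) (h2 : b * x ≤ y) (h3 : c * x ≤ y) :
    ((a ⊔ b) ⊔ c) * x ≤ y := by
  rcases le_total a b with h | h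
  · rw [sup_eq_right.mpr h]
    rcases le_total b c with h' | h'
    · rw [sup_eq_right.mpr h']; exact h3
    · rw [sup_eq_left.mpr h']; exact h2
  · rw [sup_eq_left.mpr h]
    rcases le_total a c with h' | h'
    · rw [sup_eq_right.mpr h']; exact h3
    · rw [sup_eq_left.mpr h']; exact h1

lemma tr_pow_M_le (A B C : TMat n) (α β : ℝ≥0) (hα : α ≠ 0) (hβ : β ≠ 0)
    (hC : tTr C ≤ 1)
    (h1 : specRad A ⊔ sigmaC A C ≤ α) (h2 : specRad B ⊔ sigmaC B C ⊔ Gfun A B C α ≤ β)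
    (r : ℕ) (hr1 : 1 ≤ r) (hr2 : r ≤ n) :
    ttr (tpow (tadd (tadd (tsmul α⁻¹ A) (tsmul β⁻¹ B)) C) r) ≤ 1 := by
  refine ttr_le fun i => ?_
  refine le_trans (tpow_tadd_le A B C α β r i i) ?_
  refine Finset.sup_le fun w _ => ?_
  have hlen : (List.ofFn w).length = r := by simp
  calc lchain ((List.ofFn w).map (sMat A B C α β)) i i
      ≤ ttr (lchain ((List.ofFn w).map (sMat A B C α β))) := le_ttr _ _
    _ = (α⁻¹ ^ (List.ofFn w).count 0 * β⁻¹ ^ (List.ofFn w).count 1)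
        * ttr (lchain ((List.ofFn w).map (uMat A B C))) := by
        rw [lchain_scaled, ttr_tsmul]
    _ ≤ (α⁻¹ ^ (List.ofFn w).count 0 * β⁻¹ ^ (List.ofFn w).count 1)
        * (α ^ (List.ofFn w).count 0 * β ^ (List.ofFn w).count 1) :=
        mul_le_mul' le_rfl (word_trace_le A B C α β hα hC h1 h2 (List.ofFn w)
          (by omega) (by omega))
    _ = (α⁻¹ ^ (List.ofFn w).count 0 * α ^ (List.ofFn w).count 0)
        * (β⁻¹ ^ (List.ofFn w).count 1 * β ^ (List.ofFn w).count 1) := by ring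
    _ = 1 := by
        rw [inv_pow, inv_mul_cancel₀ (pow_ne_zero _ hα), inv_pow,
          inv_mul_cancel₀ (pow_ne_zero _ hβ), one_mul]

lemma system_equiv (A B C : TMat n) (α β : ℝ≥0) (hα : α ≠ 0) (hβ : β ≠ 0)
    (x : Fin n → ℝ≥0) (hpos : ∀ i, 0 < x i) :
    (fobj A x ≤ α ∧ fobj B x ≤ β ∧ tmulVec C x ≤ x) ↔
      tmulVec (tadd (tadd (tsmul α⁻¹ A) (tsmul β⁻¹ B)) C) x ≤ x := by
  have hxne : ∀ i, x i ≠ 0 := fun i => (hpos i).ne'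
  constructor
  · rintro ⟨hfA, hfB, hCx⟩
    intro i
    refine tmulVec_le fun j => ?_
    show ((α⁻¹ * A i j ⊔ β⁻¹ * B i j) ⊔ C i j) * x j ≤ x i
    refine sup_mul_le3 ?_ ?_ ?_
    · have hAij : A i j * x j / x i ≤ α :=
        le_trans (Finset.le_sup (f := fun p : Fin n × Fin n => A p.1 p.2 * x p.2 / x p.1)
          (Finset.mem_univ (i, j))) hfA
      have := (div_le_iff₀ (pos_iff_ne_zero.mpr (hxne i))).mp hAij
      calc α⁻¹ * A i j * x j = α⁻¹ * (A i j * x j) := mul_assoc _ _ _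
        _ ≤ α⁻¹ * (α * x i) := mul_le_mul' le_rfl this
        _ = x i := by rw [← mul_assoc, inv_mul_cancel₀ hα, one_mul]
    · have hBij : B i j * x j / x i ≤ β :=
        le_trans (Finset.le_sup (f := fun p : Fin n × Fin n => B p.1 p.2 * x p.2 / x p.1)
          (Finset.mem_univ (i, j))) hfB
      have := (div_le_iff₀ (pos_iff_ne_zero.mpr (hxne i))).mp hBij
      calc β⁻¹ * B i j * x j = β⁻¹ * (B i j * x j) := mul_assoc _ _ _
        _ ≤ β⁻¹ * (β * x i) := mul_le_mul' le_rfl this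
        _ = x i := by rw [← mul_assoc, inv_mul_cancel₀ hβ, one_mul]
    · exact le_trans (le_tmulVec C x i j) (hCx i)
  · intro hMx
    have hentry : ∀ i j,
        ((α⁻¹ * A i j ⊔ β⁻¹ * B i j) ⊔ C i j) * x j ≤ x i :=
      fun i j => le_trans
        (le_tmulVec (tadd (tadd (tsmul α⁻¹ A) (tsmul β⁻¹ B)) C) x i j) (hMx i)
    refine ⟨?_, ?_, ?_⟩
    · refine Finset.sup_le fun p _ => ?_
      have h := le_trans (mul_le_mul' (le_trans le_sup_left le_sup_left) le_rfl)
        (hentry p.1 p.2)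
      rw [div_le_iff₀ (pos_iff_ne_zero.mpr (hxne p.1))]
      calc A p.1 p.2 * x p.2 = α * (α⁻¹ * A p.1 p.2 * x p.2) := by
            rw [← mul_assoc, ← mul_assoc, mul_inv_cancel₀ hα, one_mul]
        _ ≤ α * x p.1 := mul_le_mul' le_rfl h
        _ = α * x p.1 := rfl
    · refine Finset.sup_le fun p _ => ?_
      have h := le_trans (mul_le_mul' (le_trans le_sup_right le_sup_left) le_rfl)
        (hentry p.1 p.2)
      rw [div_le_iff₀ (pos_iff_ne_zero.mpr (hxne p.1))]
      calc B p.1 p.2 * x p.2 = β * (β⁻¹ * B p.1 p.2 * x p.2) := by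
            rw [← mul_assoc, ← mul_assoc, mul_inv_cancel₀ hβ, one_mul]
        _ ≤ β * x p.1 := mul_le_mul' le_rfl h
    · intro i
      refine tmulVec_le fun j => ?_
      exact le_trans (mul_le_mul' le_sup_right le_rfl) (hentry i j)

end Final
/-- For Tr(C) ≤ 1 and α ≥ max(λ,σ), β ≥ max(μ,θ,G(α)), the positive solutions of the
system f_A(x) ≤ α, f_B(x) ≤ β, C ⊗ x ≤ x are exactly the vectors
(α⁻¹A ⊕ β⁻¹B ⊕ C)* ⊗ u with u positive. -/
theorem stmt16 {n : ℕ} (A B C : TMat n) (hC : tTr C ≤ 1)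
    (α β : ℝ≥0) (hα : 0 < α) (hβ : 0 < β)
    (h1 : specRad A ⊔ sigmaC A C ≤ α)
    (h2 : specRad B ⊔ sigmaC B C ⊔ Gfun A B C α ≤ β) :
    {x : Fin n → ℝ≥0 | (∀ i, 0 < x i) ∧ fobj A x ≤ α ∧ fobj B x ≤ β ∧ tmulVec C x ≤ x} =
      {x | ∃ u : Fin n → ℝ≥0, (∀ i, 0 < u i) ∧
        x = tmulVec (tstar (tadd (tadd (tsmul α⁻¹ A) (tsmul β⁻¹ B)) C)) u} := by
  have hα' : α ≠ 0 := hα.ne'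
  have hβ' : β ≠ 0 := hβ.ne'
  rcases Nat.eq_zero_or_pos n with hn | hn
  · subst hn
    ext x
    simp only [Set.mem_setOf_eq]
    constructor
    · rintro ⟨hpos, -, -, -⟩
      exact ⟨x, hpos, funext fun i => i.elim0⟩
    · rintro ⟨u, -, -⟩
      exact ⟨fun i => i.elim0, Finset.sup_le fun p _ => p.1.elim0,
        Finset.sup_le fun p _ => p.1.elim0, fun i => i.elim0⟩
  · set M := tadd (tadd (tsmul α⁻¹ A) (tsmul β⁻¹ B)) C with hM
    have hcyc : ∀ r, 1 ≤ r → r ≤ n → ttr (tpow M r) ≤ 1 := fun r hr1 hr2 =>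
      tr_pow_M_le A B C α β hα' hβ' hC h1 h2 r hr1 hr2
    have hid_le : ∀ i : Fin n, (1 : ℝ≥0) ≤ tstar M i i := by
      intro i
      have h0 : tpow M 0 i i ≤ tstar M i i := le_tstar M hn i i
      calc (1:ℝ≥0) = tpow M 0 i i := by simp [tpow, tId]
        _ ≤ _ := h0
    ext x
    simp only [Set.mem_setOf_eq]
    constructor
    · rintro ⟨hpos, hfA, hfB, hCx⟩
      have hMx : tmulVec M x ≤ x := (system_equiv A B C α β hα' hβ' x hpos).mp ⟨hfA, hfB, hCx⟩
      refine ⟨x, hpos, ?_⟩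
      have hle : tmulVec (tstar M) x ≤ x := by
        intro i
        refine tmulVec_le fun j => ?_
        show tstar M i j * x j ≤ x i
        rw [show tstar M i j = (Finset.range n).sup fun k => tpow M k i j from rfl,
          NNReal.finset_sup_mul]
        refine Finset.sup_le fun k _ => ?_
        exact le_trans (le_tmulVec (tpow M k) x i j) (tpow_tmulVec_le hMx k i)
      have hge : x ≤ tmulVec (tstar M) x := by
        intro i
        calc x i = 1 * x i := (one_mul _).symm
          _ ≤ tstar M i i * x i := mul_le_mul' (hid_le i) le_rfl
          _ ≤ _ := le_tmulVec _ _ _ _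
      exact (le_antisymm hle hge).symm
    · rintro ⟨u, hu, rfl⟩
      have hpos : ∀ i, 0 < tmulVec (tstar M) u i := by
        intro i
        refine lt_of_lt_of_le (hu i) ?_
        calc u i = 1 * u i := (one_mul _).symm
          _ ≤ tstar M i i * u i := mul_le_mul' (hid_le i) le_rfl
          _ ≤ _ := le_tmulVec _ _ _ _
      have hMstar : ∀ i j, tmul M (tstar M) i j ≤ tstar M i j := by
        intro i j
        refine tmul_le fun p => ?_
        show M i p * tstar M p j ≤ _
        rw [show tstar M p j = (Finset.range n).sup fun k => tpow M k p j from rfl,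
          NNReal.mul_finset_sup]
        refine Finset.sup_le fun k hk => ?_
        have hk' : k < n := Finset.mem_range.mp hk
        have hstep : M i p * tpow M k p j ≤ tpow M (k + 1) i j := le_tmul M (tpow M k) i j p
        by_cases hlt : k + 1 < n
        · exact le_trans hstep (le_tstar M hlt i j)
        · have hkn : k + 1 = n := by omega
          exact le_trans hstep (hkn ▸ tpow_n_le_tstar M hcyc i j)
      have hMx : tmulVec M (tmulVec (tstar M) u) ≤ tmulVec (tstar M) u := by
        rw [← tmulVec_tmul]
        exact tmulVec_mono_mat hMstar u
      obtain ⟨hfA, hfB, hCx⟩ := (system_equiv A B C α β hα' hβ' _ hpos).mpr hMx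
      exact ⟨hpos, hfA, hfB, hCx⟩
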